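/- Let H be the 5-dimensional complex Heisenberg Lie algebra with basis r₋₂, r₋₁, r₀, r₁, r₂ and brackets [r₋₁, r₁] = r₀, [r₂, r₋₂] = r₀, and [r_i, r_j] = 0 whenever i + j ≠ 0, and let w = H ⊕ sl₂(ℂ[X]) be the direct sum of Lie algebras, where sl₂(ℂ[X]) is the Lie algebra of 2×2 trace-zero matrices over ℂ[X] with y = E₁₂, z = E₂₁, h = E₁₁ − E₂₂. Set X₁ = r₁ − (1/2)y + (1/2)X·z, X₂ = r₋₁ + z, X₃ = r₋₂, and A(u) = X₁ + (u/3)·X₂ + (u²/6)·X₃ for u ∈ ℂ. Let we^2 = span_ℂ{r₋₂, r₋₁, z, 2r₀ + h}, let we^3 be the Lie subalgebra of w generated by we^2 together with all brackets [x, A(u)] (x ∈ we^2, u ∈ ℂ), and let we^4 be the Lie subalgebra generated by we^3 together with all [x, A(u)] (x ∈ we^3, u ∈ ℂ). Then we^3 = span_ℂ{r₋₂, r₋₁, r₀} ⊕ sl₂(ℂ[X]) and we^4 = we^3. -/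

import Mathlib

open Polynomial Matrix

attribute [local instance 100] LieRing.ofAssociativeRing

/-- Ambient associative algebra containing the Wahlquist–Estabrook algebra
`w = H ⊕ sl₂(ℂ[X])` of KdV: the 5-dimensional Heisenberg algebra `H` is
realized inside `4×4` strictly upper-triangular complex matrices
(`r₋₁ = E₁₂, r₁ = E₂₄, r₂ = E₁₃, r₋₂ = E₃₄, r₀ = E₁₄`, so that
`[r₋₁,r₁] = [r₂,r₋₂] = r₀` and all other brackets of basis elements vanish),
and `sl₂(ℂ[X])` inside `2×2` matrices over `ℂ[X]`; the two factors of the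
product commute, and the bracket is the componentwise commutator. -/
abbrev WEAmb := Matrix (Fin 4) (Fin 4) ℂ × Matrix (Fin 2) (Fin 2) ℂ[X]

noncomputable def rHeis : ℤ → WEAmb
  | -1 => (Matrix.single 0 1 1, 0)
  | 1 => (Matrix.single 1 3 1, 0)
  | 2 => (Matrix.single 0 2 1, 0)
  | -2 => (Matrix.single 2 3 1, 0)
  | 0 => (Matrix.single 0 3 1, 0)
  | _ => 0

noncomputable def yE : WEAmb := (0, Matrix.single 0 1 1)
noncomputable def zE : WEAmb := (0, Matrix.single 1 0 1)
noncomputable def hE : WEAmb :=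
  (0, Matrix.single 0 0 1 - Matrix.single 1 1 1)
/-- `X·z`, the element `λ z` of `sl₂(ℂ[X])`. -/
noncomputable def zXE : WEAmb := (0, (X : ℂ[X]) • Matrix.single 1 0 1)

/-- `X₁ = r₁ − (1/2)y + (1/2)X·z`. -/
noncomputable def X₁E : WEAmb := rHeis 1 - (2⁻¹ : ℂ) • yE + (2⁻¹ : ℂ) • zXE
/-- `X₂ = r₋₁ + z`. -/
noncomputable def X₂E : WEAmb := rHeis (-1) + zE
/-- `X₃ = r₋₂`. -/
noncomputable def X₃E : WEAmb := rHeis (-2)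

/-- `A(u) = X₁ + (u/3)X₂ + (u²/6)X₃`, the `x`-part of the universal
zero-curvature representation of KdV. -/
noncomputable def AKdV (u : ℂ) : WEAmb := X₁E + (u / 3) • X₂E + (u ^ 2 / 6) • X₃E

namespace Stmt14Aux

/-! ### 2×2 side -/

noncomputable def yP (p : ℂ[X]) : Matrix (Fin 2) (Fin 2) ℂ[X] := Matrix.single 0 1 p
noncomputable def zP (p : ℂ[X]) : Matrix (Fin 2) (Fin 2) ℂ[X] := Matrix.single 1 0 p
noncomputable def hP (p : ℂ[X]) : Matrix (Fin 2) (Fin 2) ℂ[X] :=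
  Matrix.single 0 0 p - Matrix.single 1 1 p

theorem lie_yz (p q : ℂ[X]) : ⁅yP p, zP q⁆ = hP (p*q) := by
  simp [yP, zP, hP, Ring.lie_def, mul_comm]

theorem lie_hy (p q : ℂ[X]) : ⁅hP p, yP q⁆ = yP (2*(p*q)) := by
  simp [yP, hP, Ring.lie_def, sub_mul, mul_sub, two_mul, Matrix.single_add,
    mul_comm, mul_two]

theorem lie_hz (p q : ℂ[X]) : ⁅hP p, zP q⁆ = -zP (2*(p*q)) := by
  have h2 : (2:ℂ[X])*(p*q) = p*q + p*q := two_mul _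
  simp [zP, hP, Ring.lie_def, sub_mul, mul_sub, h2, Matrix.single_add, mul_comm]
  abel

theorem smul_yP (c : ℂ) (p : ℂ[X]) : c • yP p = yP (C c * p) := by
  simp [yP, Matrix.smul_single, Polynomial.smul_eq_C_mul]
theorem smul_zP (c : ℂ) (p : ℂ[X]) : c • zP p = zP (C c * p) := by
  simp [zP, Matrix.smul_single, Polynomial.smul_eq_C_mul]
theorem smul_hP (c : ℂ) (p : ℂ[X]) : c • hP p = hP (C c * p) := by
  simp [hP, smul_sub, Matrix.smul_single, Polynomial.smul_eq_C_mul]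

theorem yP_add (p q : ℂ[X]) : yP (p + q) = yP p + yP q := Matrix.single_add _ _ _ _
theorem zP_add (p q : ℂ[X]) : zP (p + q) = zP p + zP q := Matrix.single_add _ _ _ _
theorem hP_add (p q : ℂ[X]) : hP (p + q) = hP p + hP q := by
  simp [hP, Matrix.single_add]; abel

theorem trace_yP (p : ℂ[X]) : Matrix.trace (yP p) = 0 := by simp [yP, Matrix.trace_fin_two]
theorem trace_zP (p : ℂ[X]) : Matrix.trace (zP p) = 0 := by simp [zP, Matrix.trace_fin_two]
theorem trace_hP (p : ℂ[X]) : Matrix.trace (hP p) = 0 := by simp [hP, Matrix.trace_fin_two]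

theorem decomp (P : Matrix (Fin 2) (Fin 2) ℂ[X]) (h : Matrix.trace P = 0) :
    P = hP (P 0 0) + yP (P 0 1) + zP (P 1 0) := by
  rw [Matrix.trace_fin_two] at h
  have h11 : P 1 1 = -(P 0 0) := eq_neg_of_add_eq_zero_right h
  ext i j
  fin_cases i <;> fin_cases j <;> simp [hP, yP, zP, Matrix.single, h11]

theorem singleNeg' (i j : Fin 2) (a : ℂ[X]) :
    Matrix.single i j (-a) = -Matrix.single i j a := by
  ext k l; simp [Matrix.single]; split <;> simp

/-! ### 4×4 side -/

noncomputable def spanH : Submodule ℂ (Matrix (Fin 4) (Fin 4) ℂ) :=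
  Submodule.span ℂ {Matrix.single 2 3 1, Matrix.single 0 1 1, Matrix.single 0 3 1}

theorem spanH_mul : ∀ a ∈ spanH, ∀ b ∈ spanH, a * b = 0 := by
  intro a ha
  induction ha using Submodule.span_induction with
  | mem x hx =>
    intro b hb
    induction hb using Submodule.span_induction with
    | mem y hy =>
      simp only [Set.mem_insert_iff, Set.mem_singleton_iff] at hx hy
      rcases hx with rfl | rfl | rfl <;> rcases hy with rfl | rfl | rfl <;> simp
    | zero => simp
    | add _ _ _ _ h1 h2 => simp [mul_add, h1, h2]
    | smul c _ _ h => simp [h]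
  | zero => intro b _; simp
  | add x y _ _ hx hy => intro b hb; simp [add_mul, hx b hb, hy b hb]
  | smul c x _ hx => intro b hb; simp [smul_mul_assoc, hx b hb]

noncomputable def Bu (u : ℂ) : Matrix (Fin 4) (Fin 4) ℂ :=
  Matrix.single 1 3 1 + (u/3) • Matrix.single 0 1 1 + (u^2/6) • Matrix.single 2 3 1

theorem lieE23Bu (u : ℂ) : ⁅(Matrix.single 2 3 1 : Matrix (Fin 4) (Fin 4) ℂ), Bu u⁆ = 0 := by
  simp [Bu, Ring.lie_def, mul_add, add_mul, mul_smul_comm, smul_mul_assoc]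
theorem lieE01Bu (u : ℂ) : ⁅(Matrix.single 0 1 1 : Matrix (Fin 4) (Fin 4) ℂ), Bu u⁆ = Matrix.single 0 3 1 := by
  simp [Bu, Ring.lie_def, mul_add, add_mul, mul_smul_comm, smul_mul_assoc]
theorem lieE03Bu (u : ℂ) : ⁅(Matrix.single 0 3 1 : Matrix (Fin 4) (Fin 4) ℂ), Bu u⁆ = 0 := by
  simp [Bu, Ring.lie_def, mul_add, add_mul, mul_smul_comm, smul_mul_assoc]

theorem lie_Bu_mem (u : ℂ) : ∀ a ∈ spanH, ⁅a, Bu u⁆ ∈ spanH := by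
  intro a ha
  induction ha using Submodule.span_induction with
  | mem x hx =>
    simp only [Set.mem_insert_iff, Set.mem_singleton_iff] at hx
    rcases hx with rfl | rfl | rfl
    · rw [lieE23Bu]; exact zero_mem _
    · rw [lieE01Bu]; exact Submodule.subset_span (by simp)
    · rw [lieE03Bu]; exact zero_mem _
  | zero => rw [zero_lie]; exact zero_mem _
  | add x y _ _ hx hy => rw [add_lie]; exact add_mem hx hy
  | smul c x _ hx => rw [smul_lie]; exact Submodule.smul_mem _ _ hx

/-! ### product structure -/

theorem lie_prod (x y : WEAmb) : ⁅x, y⁆ = (⁅x.1, y.1⁆, ⁅x.2, y.2⁆) := by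
  ext <;> simp [Ring.lie_def]

theorem lie02 (P Q : Matrix (Fin 2) (Fin 2) ℂ[X]) :
    ⁅((0, P) : WEAmb), ((0, Q) : WEAmb)⁆ = (0, ⁅P, Q⁆) := by
  rw [lie_prod]; simp

theorem rm2 : rHeis (-2) = (Matrix.single 2 3 1, 0) := rfl
theorem rm1 : rHeis (-1) = (Matrix.single 0 1 1, 0) := rfl
theorem r0 : rHeis 0 = (Matrix.single 0 3 1, 0) := rfl
theorem r1 : rHeis 1 = (Matrix.single 1 3 1, 0) := rfl

theorem AKdV_fst (u : ℂ) : (AKdV u).1 = Bu u := by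
  simp only [AKdV, X₁E, X₂E, X₃E, rm2, rm1, r1, yE, zE, zXE, Prod.fst_add, Prod.fst_sub,
    Prod.smul_fst, smul_zero, add_zero, sub_zero, Bu]

theorem AKdV_snd (u : ℂ) : (AKdV u).2 = yP (C (-2⁻¹)) + zP (C (u/3) + C 2⁻¹ * X) := by
  simp [AKdV, X₁E, X₂E, X₃E, rm2, rm1, r1, yE, zE, zXE, yP, zP,
    Matrix.smul_single, Polynomial.smul_eq_C_mul, Matrix.single_add,
    singleNeg', sub_eq_add_neg, neg_add]
  abel

/-! ### the subalgebra S -/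

noncomputable def slKer : Submodule ℂ (Matrix (Fin 2) (Fin 2) ℂ[X]) :=
  LinearMap.ker (Matrix.traceLinearMap (Fin 2) ℂ ℂ[X])

noncomputable def S0 : Submodule ℂ WEAmb := spanH.prod slKer

theorem mem_S0 {v : WEAmb} : v ∈ S0 ↔ v.1 ∈ spanH ∧ Matrix.trace v.2 = 0 := by
  simp [S0, Submodule.mem_prod, slKer, LinearMap.mem_ker]

theorem trace_lie (P Q : Matrix (Fin 2) (Fin 2) ℂ[X]) : Matrix.trace ⁅P, Q⁆ = 0 := by
  rw [Ring.lie_def, Matrix.trace_sub, Matrix.trace_mul_comm, sub_self]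

theorem lie_mem_S0 {x y : WEAmb} (hx : x ∈ S0) (hy : y ∈ S0) : ⁅x, y⁆ ∈ S0 := by
  rw [mem_S0] at hx ⊢
  rw [lie_prod]
  refine ⟨?_, trace_lie _ _⟩
  have h1 := spanH_mul _ hx.1 _ (mem_S0.mp hy).1
  have h2 := spanH_mul _ (mem_S0.mp hy).1 _ hx.1
  simp [Ring.lie_def, h1, h2]

theorem lieA_mem_S0 {x : WEAmb} (hx : x ∈ S0) (u : ℂ) : ⁅x, AKdV u⁆ ∈ S0 := by
  rw [mem_S0] at hx ⊢
  rw [lie_prod]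
  exact ⟨by rw [AKdV_fst]; exact lie_Bu_mem u _ hx.1, trace_lie _ _⟩

noncomputable def S : LieSubalgebra ℂ WEAmb :=
  { S0 with lie_mem' := fun hx hy => lie_mem_S0 hx hy }

theorem mem_S {v : WEAmb} : v ∈ S ↔ v ∈ S0 := Iff.rfl



theorem smul_cancel_mem {W : LieSubalgebra ℂ WEAmb} {c : ℂ} (hc : c ≠ 0) {m : WEAmb}
    (h : c • m ∈ W) : m ∈ W := by
  have := W.smul_mem c⁻¹ h
  rwa [smul_smul, inv_mul_cancel₀ hc, one_smul] at this

theorem pc1 : (2:ℂ[X]) * (1 * C (-2⁻¹ : ℂ)) = -1 := by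
  rw [one_mul, ← map_ofNat (C : ℂ →+* ℂ[X]) 2, ← C_mul]; norm_num

theorem pc2 : (2:ℂ[X]) * (1 * (C ((0:ℂ)/3) + C (2⁻¹:ℂ) * X)) = X := by
  rw [one_mul, ← map_ofNat (C : ℂ →+* ℂ[X]) 2]
  norm_num
  rw [← mul_assoc, ← C_mul]
  norm_num

noncomputable def G₂ : Set WEAmb :=
  ↑(Submodule.span ℂ {rHeis (-2), rHeis (-1), zE, (2 : ℂ) • rHeis 0 + hE})

noncomputable def W3 : LieSubalgebra ℂ WEAmb :=
  LieSubalgebra.lieSpan ℂ WEAmb (G₂ ∪ {a | ∃ x ∈ G₂, ∃ u : ℂ, a = ⁅x, AKdV u⁆})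

theorem gens_S0 : {rHeis (-2), rHeis (-1), zE, (2 : ℂ) • rHeis 0 + hE} ⊆ (S0 : Set WEAmb) := by
  intro v hv
  simp only [Set.mem_insert_iff, Set.mem_singleton_iff] at hv
  rcases hv with rfl | rfl | rfl | rfl
  · exact mem_S0.mpr ⟨Submodule.subset_span (by simp [rm2]), by simp [rm2]⟩
  · exact mem_S0.mpr ⟨Submodule.subset_span (by simp [rm1]), by simp [rm1]⟩
  · exact mem_S0.mpr ⟨zero_mem _, trace_zP 1⟩
  · refine mem_S0.mpr ⟨?_, ?_⟩
    · have : ((2:ℂ) • rHeis 0 + hE).1 = (2:ℂ) • Matrix.single 0 3 1 := by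
        simp [r0, hE]
      rw [this]
      exact Submodule.smul_mem _ _ (Submodule.subset_span (by simp))
    · have : ((2:ℂ) • rHeis 0 + hE).2 = hP 1 := by
        simp [r0, hE, hP]
      rw [this]; exact trace_hP 1

theorem span_we2_le_S0 :
    Submodule.span ℂ {rHeis (-2), rHeis (-1), zE, (2 : ℂ) • rHeis 0 + hE} ≤ S0 :=
  Submodule.span_le.mpr gens_S0

theorem W3_le_S : W3 ≤ S := by
  rw [W3, LieSubalgebra.lieSpan_le]
  apply Set.union_subset
  · exact fun v hv => span_we2_le_S0 hv
  · rintro a ⟨x, hx, u, rfl⟩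
    exact lieA_mem_S0 (span_we2_le_S0 hx) u

theorem hbrW3 : ∀ v ∈ G₂, ∀ u : ℂ, ⁅v, AKdV u⁆ ∈ W3 := fun v hv u =>
  LieSubalgebra.subset_lieSpan (Or.inr ⟨v, hv, u, rfl⟩)

theorem memG₂ : ∀ v ∈ ({rHeis (-2), rHeis (-1), zE, (2 : ℂ) • rHeis 0 + hE} : Set WEAmb),
    v ∈ W3 := fun v hv => LieSubalgebra.subset_lieSpan (Or.inl (Submodule.subset_span hv))

theorem lem1 (u : ℂ) : ⁅rHeis (-1), AKdV u⁆ = rHeis 0 := by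
  rw [lie_prod]
  refine Prod.ext ?_ ?_
  · show ⁅Matrix.single 0 1 1, (AKdV u).1⁆ = Matrix.single 0 3 1
    rw [AKdV_fst]; exact lieE01Bu u
  · show ⁅(0 : Matrix (Fin 2) (Fin 2) ℂ[X]), (AKdV u).2⁆ = 0
    rw [zero_lie]

theorem hr0W3 : rHeis 0 ∈ W3 := by
  have h := hbrW3 (rHeis (-1)) (Submodule.subset_span (by simp)) 0
  rwa [lem1 0] at h

theorem hhEW3 : hE ∈ W3 := by
  have h4 : (2:ℂ) • rHeis 0 + hE ∈ W3 := memG₂ _ (by simp)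
  have h := sub_mem h4 (W3.smul_mem (2:ℂ) hr0W3)
  simpa using h

theorem lem2 (u : ℂ) : ⁅(2:ℂ) • rHeis 0 + hE, AKdV u⁆
    = (0, yP (2*(1*C (-2⁻¹))) + -zP (2*(1*(C (u/3) + C 2⁻¹ * X)))) := by
  rw [lie_prod]
  refine Prod.ext ?_ ?_
  · show ⁅((2:ℂ) • rHeis 0 + hE).1, (AKdV u).1⁆ = 0
    have : ((2:ℂ) • rHeis 0 + hE).1 = (2:ℂ) • Matrix.single 0 3 1 := by simp [r0, hE]
    rw [this, AKdV_fst, smul_lie, lieE03Bu, smul_zero]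
  · show ⁅((2:ℂ) • rHeis 0 + hE).2, (AKdV u).2⁆ = _
    have : ((2:ℂ) • rHeis 0 + hE).2 = hP 1 := by simp [r0, hE, hP]
    rw [this, AKdV_snd, lie_add, lie_hy, lie_hz]

theorem e0 : ⁅(2:ℂ) • rHeis 0 + hE, AKdV 0⁆ = (0, yP (-1) + -zP X) := by
  rw [lem2 0, pc1, pc2]

theorem htW3 : ((0, yP 1 + zP X) : WEAmb) ∈ W3 := by
  have h := neg_mem (hbrW3 ((2:ℂ) • rHeis 0 + hE) (Submodule.subset_span (by simp)) 0)
  rw [e0] at h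
  have e : ((0, yP 1 + zP X) : WEAmb) = -(0, yP (-1) + -zP X) := by
    refine Prod.ext (by simp) ?_
    show yP 1 + zP X = -(yP (-1) + -zP X)
    have hneg : yP (-1) = -(yP 1) := singleNeg' 0 1 1
    rw [hneg]; abel
  rw [e]; exact h

theorem hsW3 : ((0, yP (2*(1*1)) + -zP (2*(1*X))) : WEAmb) ∈ W3 := by
  have h := W3.lie_mem hhEW3 htW3
  rw [show hE = ((0, hP 1) : WEAmb) from rfl, lie02, lie_add, lie_hy, lie_hz] at h
  exact h

theorem hz1W3 : ((0, zP X) : WEAmb) ∈ W3 := by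
  apply smul_cancel_mem (c := (4:ℂ)) (by norm_num)
  have h := sub_mem (W3.smul_mem (2:ℂ) htW3) hsW3
  have e : (4:ℂ) • ((0, zP X) : WEAmb)
      = (2:ℂ) • ((0, yP 1 + zP X) : WEAmb) - (0, yP (2*(1*1)) + -zP (2*(1*X))) := by
    refine Prod.ext (by simp) ?_
    show (4:ℂ) • zP X = (2:ℂ) • (yP 1 + zP X) - (yP (2*(1*1)) + -zP (2*(1*X)))
    ext i j
    fin_cases i <;> fin_cases j <;>
      simp [yP, zP, Matrix.single, Polynomial.smul_eq_C_mul,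
        map_ofNat (C : ℂ →+* ℂ[X]) 2, map_ofNat (C : ℂ →+* ℂ[X]) 4] <;> ring
  rw [e]; exact h

theorem hy0W3 : ((0, yP 1) : WEAmb) ∈ W3 := by
  have h := sub_mem htW3 hz1W3
  have e : ((0, yP 1) : WEAmb) = (0, yP 1 + zP X) - (0, zP X) := by
    refine Prod.ext (by simp) ?_
    show yP 1 = (yP 1 + zP X) - zP X
    abel
  rw [e]; exact h

theorem hstepW3 (n : ℕ) (hz : ((0, zP (X^n)) : WEAmb) ∈ W3) :
    ((0, hP (X^n)) : WEAmb) ∈ W3 := by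
  have h := W3.lie_mem hy0W3 hz
  rwa [lie02, lie_yz, one_mul] at h

theorem zmemW3 : ∀ n : ℕ, ((0, zP (X^n)) : WEAmb) ∈ W3 := by
  intro n
  induction n with
  | zero =>
    have e : ((0, zP (X^0)) : WEAmb) = zE := by
      refine Prod.ext (by simp [zE]) ?_
      show zP (X^0) = Matrix.single 1 0 1
      rw [pow_zero]; rfl
    rw [e]; exact memG₂ _ (by simp)
  | succ n ih =>
    have hh := hstepW3 n ih
    apply smul_cancel_mem (c := (-2:ℂ)) (by norm_num)
    have h := W3.lie_mem hh hz1W3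
    rw [lie02, lie_hz] at h
    have e : (-2:ℂ) • ((0, zP (X^(n+1))) : WEAmb) = (0, -zP (2*(X^n*X))) := by
      refine Prod.ext (by simp) ?_
      show (-2:ℂ) • zP (X^(n+1)) = -zP (2*(X^n*X))
      ext i j
      fin_cases i <;> fin_cases j <;>
        simp [zP, Matrix.single, Polynomial.smul_eq_C_mul,
          map_ofNat (C : ℂ →+* ℂ[X]) 2, pow_succ] <;> ring
    rw [e]; exact h

theorem hmemW3 (n : ℕ) : ((0, hP (X^n)) : WEAmb) ∈ W3 := hstepW3 n (zmemW3 n)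

theorem ymemW3 (n : ℕ) : ((0, yP (X^n)) : WEAmb) ∈ W3 := by
  apply smul_cancel_mem (c := (2:ℂ)) two_ne_zero
  have h := W3.lie_mem (hmemW3 n) hy0W3
  rw [lie02, lie_hy] at h
  have e : (2:ℂ) • ((0, yP (X^n)) : WEAmb) = (0, yP (2*(X^n*1))) := by
    refine Prod.ext (by simp) ?_
    show (2:ℂ) • yP (X^n) = yP (2*(X^n*1))
    ext i j
    fin_cases i <;> fin_cases j <;>
      simp [yP, Matrix.single, Polynomial.smul_eq_C_mul,
        map_ofNat (C : ℂ →+* ℂ[X]) 2] <;> ring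
  rw [e]; exact h

theorem pair_add (P Q : Matrix (Fin 2) (Fin 2) ℂ[X]) :
    ((0, P + Q) : WEAmb) = (0, P) + (0, Q) := by
  refine Prod.ext (by simp) rfl

theorem ypolyW3 (p : ℂ[X]) : ((0, yP p) : WEAmb) ∈ W3 := by
  induction p using Polynomial.induction_on' with
  | add p q hp hq => rw [yP_add, pair_add]; exact add_mem hp hq
  | monomial n a =>
    have e : ((0, yP (monomial n a)) : WEAmb) = a • (0, yP (X^n)) := by
      refine Prod.ext (by simp) ?_
      show yP (monomial n a) = a • yP (X^n)
      rw [smul_yP, C_mul_X_pow_eq_monomial]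
    rw [e]; exact W3.smul_mem a (ymemW3 n)

theorem zpolyW3 (p : ℂ[X]) : ((0, zP p) : WEAmb) ∈ W3 := by
  induction p using Polynomial.induction_on' with
  | add p q hp hq => rw [zP_add, pair_add]; exact add_mem hp hq
  | monomial n a =>
    have e : ((0, zP (monomial n a)) : WEAmb) = a • (0, zP (X^n)) := by
      refine Prod.ext (by simp) ?_
      show zP (monomial n a) = a • zP (X^n)
      rw [smul_zP, C_mul_X_pow_eq_monomial]
    rw [e]; exact W3.smul_mem a (zmemW3 n)

theorem hpolyW3 (p : ℂ[X]) : ((0, hP p) : WEAmb) ∈ W3 := by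
  induction p using Polynomial.induction_on' with
  | add p q hp hq => rw [hP_add, pair_add]; exact add_mem hp hq
  | monomial n a =>
    have e : ((0, hP (monomial n a)) : WEAmb) = a • (0, hP (X^n)) := by
      refine Prod.ext (by simp) ?_
      show hP (monomial n a) = a • hP (X^n)
      rw [smul_hP, C_mul_X_pow_eq_monomial]
    rw [e]; exact W3.smul_mem a (hmemW3 n)

theorem sl_le_W3 (P : Matrix (Fin 2) (Fin 2) ℂ[X]) (hP : Matrix.trace P = 0) :
    ((0, P) : WEAmb) ∈ W3 := by
  rw [decomp P hP, pair_add, pair_add]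
  exact add_mem (add_mem (hpolyW3 _) (ypolyW3 _)) (zpolyW3 _)

theorem H_le_W3 : ∀ M ∈ spanH, ((M, 0) : WEAmb) ∈ W3 := by
  intro M hM
  induction hM using Submodule.span_induction with
  | mem x hx =>
    simp only [Set.mem_insert_iff, Set.mem_singleton_iff] at hx
    rcases hx with rfl | rfl | rfl
    · exact memG₂ (rHeis (-2)) (by simp)
    · exact memG₂ (rHeis (-1)) (by simp)
    · exact hr0W3
  | zero => exact W3.zero_mem
  | add x y _ _ hx hy =>
    have e : ((x + y, 0) : WEAmb) = (x, 0) + (y, 0) := by refine Prod.ext rfl (by simp)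
    rw [e]; exact add_mem hx hy
  | smul c x _ hx =>
    have e : ((c • x, 0) : WEAmb) = c • (x, 0) := by refine Prod.ext rfl (by simp)
    rw [e]; exact W3.smul_mem c hx

theorem S0_le_W3 : ∀ v ∈ S0, v ∈ W3 := by
  intro v hv
  rw [mem_S0] at hv
  have e : v = (v.1, 0) + ((0, v.2) : WEAmb) := by
    refine Prod.ext (by simp) (by simp)
  rw [e]
  exact add_mem (H_le_W3 v.1 hv.1) (sl_le_W3 v.2 hv.2)

end Stmt14Aux

open Stmt14Aux in
/-- With `we² = span_ℂ{r₋₂, r₋₁, z, 2r₀ + h}`, the Lie subalgebra `we³`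
generated by `we²` and all `⁅x, A(u)⁆` (`x ∈ we²`) equals
`span_ℂ{r₋₂, r₋₁, r₀} ⊕ sl₂(ℂ[X])`, and the chain stabilizes: `we⁴ = we³`. -/
theorem stmt14 (we₂ : Set WEAmb)
    (hwe₂ : we₂ = ↑(Submodule.span ℂ
      {rHeis (-2), rHeis (-1), zE, (2 : ℂ) • rHeis 0 + hE}))
    (we₃ we₄ : LieSubalgebra ℂ WEAmb)
    (hwe₃ : we₃ = LieSubalgebra.lieSpan ℂ WEAmb
      (we₂ ∪ {a | ∃ x ∈ we₂, ∃ u : ℂ, a = ⁅x, AKdV u⁆}))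
    (hwe₄ : we₄ = LieSubalgebra.lieSpan ℂ WEAmb
      ((we₃ : Set WEAmb) ∪ {a | ∃ x ∈ we₃, ∃ u : ℂ, a = ⁅x, AKdV u⁆})) :
    we₃.toSubmodule
      = Submodule.span ℂ {rHeis (-2), rHeis (-1), rHeis 0}
        ⊔ Submodule.map (LinearMap.inr ℂ (Matrix (Fin 4) (Fin 4) ℂ)
            (Matrix (Fin 2) (Fin 2) ℂ[X]))
          (LinearMap.ker (Matrix.traceLinearMap (Fin 2) ℂ ℂ[X]))
    ∧ we₄ = we₃ := by
  subst hwe₂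
  subst hwe₃
  subst hwe₄
  have h1 : W3.toSubmodule = S0 := by
    apply le_antisymm
    · intro x hx
      exact (W3_le_S hx : x ∈ S0)
    · intro x hx
      exact S0_le_W3 x hx
  have himg : ({rHeis (-2), rHeis (-1), rHeis 0} : Set WEAmb)
      = (LinearMap.inl ℂ (Matrix (Fin 4) (Fin 4) ℂ) (Matrix (Fin 2) (Fin 2) ℂ[X])) ''
        {Matrix.single 2 3 1, Matrix.single 0 1 1, Matrix.single 0 3 1} := by
    simp only [Set.image_insert_eq, Set.image_singleton, LinearMap.coe_inl, rm2, rm1, r0]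
  have h2 : S0 = Submodule.span ℂ {rHeis (-2), rHeis (-1), rHeis 0}
      ⊔ Submodule.map (LinearMap.inr ℂ (Matrix (Fin 4) (Fin 4) ℂ)
          (Matrix (Fin 2) (Fin 2) ℂ[X]))
        (LinearMap.ker (Matrix.traceLinearMap (Fin 2) ℂ ℂ[X])) := by
    rw [himg, Submodule.span_image]
    unfold S0 spanH slKer
    exact LinearMap.prod_eq_sup_map _ _
  constructor
  · exact h1.trans h2
  · show LieSubalgebra.lieSpan ℂ WEAmb
        ((W3 : Set WEAmb) ∪ {a | ∃ x ∈ W3, ∃ u : ℂ, a = ⁅x, AKdV u⁆}) = W3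
    apply le_antisymm
    · rw [LieSubalgebra.lieSpan_le]
      apply Set.union_subset (Set.Subset.refl _)
      rintro a ⟨x, hx, u, rfl⟩
      exact S0_le_W3 _ (lieA_mem_S0 (W3_le_S hx) u)
    · exact fun x hx => LieSubalgebra.subset_lieSpan (Or.inl hx)
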